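/- arXiv:1411.0222 — 2 statements merged into one kernel-verified Lean document; each statement's English description precedes it below -/
import Mathlib

section
/- The mixed composition product distributes to the left over the shuffle product: for all c, d ∈ ℝ⟨⟨X⟩⟩ and e_δ = (e_L, e_R), one has (c ⧢ d) ∘̃ e_δ = (c ∘̃ e_δ) ⧢ (d ∘̃ e_δ). -/
/-- Formal power series over the alphabet `X = {x₀, x₁}` (encoded as `Bool`,
with `x₀ = false` and `x₁ = true`). -/
abbrev FPS := List Bool → ℝ

/-- The letter `x₀`. -/
def x₀ : Bool := false

/-- The letter `x₁`. -/
def x₁ : Bool := true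

/-- Shuffle product of formal power series, via the left-quotient recursion. -/
noncomputable def shuffle : (List Bool → ℝ) → (List Bool → ℝ) → List Bool → ℝ
  | c, d, [] => c [] * d []
  | c, d, x :: w => shuffle (fun u => c (x :: u)) d w + shuffle c (fun u => d (x :: u)) w

/-- The series `1` (the empty word). -/
noncomputable def oneF : FPS := fun w => match w with | [] => 1 | _ => 0

/-- The series corresponding to a single word. -/
noncomputable def ind (η : List Bool) : FPS := fun w => if w = η then 1 else 0

/-- Left catenation of the series `e` by a letter `x`: the series `x e`. -/
noncomputable def pre (x : Bool) (e : FPS) : FPS :=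
  fun w => match w with
  | [] => 0
  | y :: u => if y = x then e u else 0

/-- The word-indexed family of endomorphisms `φ_d`, determined by
`φ_d(x₀)(e) = x₀ e` and `φ_d(x₁)(e) = x₁(d_L ⧢ e) + x₀(d_R ⧢ e)`. -/
noncomputable def phiW (d : FPS × FPS) : List Bool → FPS → FPS
  | [], e => e
  | x :: η, e =>
      if x then pre x₁ (shuffle d.1 (phiW d η e)) + pre x₀ (shuffle d.2 (phiW d η e))
      else pre x₀ (phiW d η e)

/-- The mixed composition product `c ∘̃ d_δ = Σ_η (c,η) φ_d(η)(1)`.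
(For each word `w` only the finitely many `η` with `|η| ≤ |w|` contribute.) -/
noncomputable def mixedComp (c : FPS) (d : FPS × FPS) : FPS :=
  fun w => ∑' η : List Bool, c η * phiW d η oneF w

lemma shuffle_nil (c d : FPS) : shuffle c d [] = c [] * d [] := rfl

lemma shuffle_cons (c d : FPS) (x : Bool) (w : List Bool) :
    shuffle c d (x :: w) =
      shuffle (fun u => c (x :: u)) d w + shuffle c (fun u => d (x :: u)) w := rfl

lemma shuffle_comm : ∀ (w : List Bool) (c d : FPS), shuffle c d w = shuffle d c w := by
  intro w
  induction w with
  | nil => intro c d; simp [shuffle_nil, mul_comm]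
  | cons x w ih =>
    intro c d
    rw [shuffle_cons, shuffle_cons, ih, ih c, add_comm]

lemma shuffle_add_right : ∀ (w : List Bool) (c d d' : FPS),
    shuffle c (fun u => d u + d' u) w = shuffle c d w + shuffle c d' w := by
  intro w
  induction w with
  | nil => intro c d d'; simp [shuffle_nil]; ring
  | cons x w ih =>
    intro c d d'
    rw [shuffle_cons, shuffle_cons, shuffle_cons, ih, ih]
    ring

lemma shuffle_add_left (w : List Bool) (c c' d : FPS) :
    shuffle (fun u => c u + c' u) d w = shuffle c d w + shuffle c' d w := by
  rw [shuffle_comm, shuffle_add_right, shuffle_comm w d c, shuffle_comm w d c']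

lemma shuffle_sum_right {ι : Type*} (s : Finset ι) (g : ι → ℝ) :
    ∀ (w : List Bool) (c : FPS) (m : ι → FPS),
      shuffle c (fun u => ∑ i ∈ s, g i * m i u) w = ∑ i ∈ s, g i * shuffle c (m i) w := by
  intro w
  induction w with
  | nil =>
    intro c m
    rw [shuffle_nil, Finset.mul_sum]
    exact Finset.sum_congr rfl (fun i _ => by simp [shuffle_nil]; ring)
  | cons x w ih =>
    intro c m
    rw [shuffle_cons, ih, ih c (fun i u => m i (x :: u)), ← Finset.sum_add_distrib]
    exact Finset.sum_congr rfl (fun i _ => by rw [shuffle_cons]; ring)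

lemma shuffle_congr_right : ∀ (w : List Bool) (c d d' : FPS),
    (∀ u : List Bool, u.length ≤ w.length → d u = d' u) →
    shuffle c d w = shuffle c d' w := by
  intro w
  induction w with
  | nil => intro c d d' h; rw [shuffle_nil, shuffle_nil, h [] (by simp)]
  | cons x w ih =>
    intro c d d' h
    rw [shuffle_cons, shuffle_cons,
      ih _ d d' (fun u hu => h u (by simpa using Nat.le_succ_of_le hu)),
      ih c (fun u => d (x :: u)) (fun u => d' (x :: u))
        (fun u hu => h (x :: u) (by simpa using Nat.succ_le_succ hu))]

lemma shuffle_zero_right : ∀ (w : List Bool) (c : FPS), shuffle c (fun _ => 0) w = 0 := by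
  intro w
  induction w with
  | nil => intro c; simp [shuffle_nil]
  | cons x w ih => intro c; rw [shuffle_cons, ih, ih]; ring

lemma shuffle_assoc : ∀ (w : List Bool) (a b c : FPS),
    shuffle (shuffle a b) c w = shuffle a (shuffle b c) w := by
  intro w
  induction w with
  | nil => intro a b c; simp [shuffle_nil, mul_assoc]
  | cons x w ih =>
    intro a b c
    rw [shuffle_cons, shuffle_cons]
    have h1 : shuffle (fun u => shuffle a b (x :: u)) c w
        = shuffle (shuffle (fun u => a (x :: u)) b) c w
          + shuffle (shuffle a (fun u => b (x :: u))) c w := by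
      rw [← shuffle_add_left]; rfl
    have h2 : shuffle a (fun u => shuffle b c (x :: u)) w
        = shuffle a (shuffle (fun u => b (x :: u)) c) w
          + shuffle a (shuffle b (fun u => c (x :: u))) w := by
      rw [← shuffle_add_right]; rfl
    rw [h1, h2, ih, ih, ih]
    ring

/-- Finset of words of length ≤ n. -/
def Ls : ℕ → Finset (List Bool)
  | 0 => {[]}
  | n + 1 => insert [] (((Ls n).image (List.cons false)) ∪ ((Ls n).image (List.cons true)))

lemma mem_Ls : ∀ {n : ℕ} {η : List Bool}, η ∈ Ls n ↔ η.length ≤ n := by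
  intro n
  induction n with
  | zero => intro η; simp [Ls, List.length_eq_zero_iff]
  | succ n ih =>
    intro η
    cases η with
    | nil => simp [Ls]
    | cons b t =>
      simp only [Ls, Finset.mem_insert, Finset.mem_union, Finset.mem_image]
      constructor
      · rintro (h | ⟨t', ht', heq⟩ | ⟨t', ht', heq⟩)
        · exact absurd h (by simp)
        · cases heq; simpa [Nat.succ_le_succ_iff] using ih.1 ht'
        · cases heq; simpa [Nat.succ_le_succ_iff] using ih.1 ht'
      · intro h
        have ht : t ∈ Ls n := ih.2 (by simpa [Nat.succ_le_succ_iff] using h)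
        cases b
        · exact Or.inr (Or.inl ⟨t, ht, rfl⟩)
        · exact Or.inr (Or.inr ⟨t, ht, rfl⟩)

lemma Ls_mono {m n : ℕ} (h : m ≤ n) : Ls m ⊆ Ls n := by
  intro η hη; exact mem_Ls.2 (le_trans (mem_Ls.1 hη) h)

lemma phiW_false (e : FPS × FPS) (η : List Bool) (f : FPS) :
    phiW e (false :: η) f = pre x₀ (phiW e η f) := by simp [phiW]

lemma phiW_true (e : FPS × FPS) (η : List Bool) (f : FPS) :
    phiW e (true :: η) f =
      pre x₁ (shuffle e.1 (phiW e η f)) + pre x₀ (shuffle e.2 (phiW e η f)) := by simp [phiW]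

lemma phiW_short (e : FPS × FPS) :
    ∀ (η w : List Bool), w.length < η.length → phiW e η oneF w = 0 := by
  intro η
  induction η with
  | nil => intro w h; simp at h
  | cons b η ih =>
    intro w h
    have hsh : ∀ (g : FPS) (w' : List Bool), w'.length < η.length →
        shuffle g (phiW e η oneF) w' = 0 := by
      intro g w' hw'
      rw [shuffle_congr_right w' g _ (fun _ => 0)
        (fun u hu => ih u (lt_of_le_of_lt hu hw')), shuffle_zero_right]
    cases w with
    | nil =>
      cases b
      · rw [phiW_false]; rfl
      · rw [phiW_true]; show (0 : ℝ) + 0 = 0; ring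
    | cons y w' =>
      have hw' : w'.length < η.length := by simpa [Nat.succ_lt_succ_iff] using h
      cases b
      · rw [phiW_false]
        show (if y = x₀ then phiW e η oneF w' else 0) = 0
        split
        · exact ih w' hw'
        · rfl
      · rw [phiW_true]
        show (if y = x₁ then shuffle e.1 (phiW e η oneF) w' else 0)
          + (if y = x₀ then shuffle e.2 (phiW e η oneF) w' else 0) = 0
        rcases y
        · simp [x₀, x₁, hsh e.2 w' hw']
        · simp [x₀, x₁, hsh e.1 w' hw']

lemma mixedComp_eq_sum (c : FPS) (e : FPS × FPS) (w : List Bool) :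
    mixedComp c e w = ∑ η ∈ Ls w.length, c η * phiW e η oneF w := by
  refine tsum_eq_sum (fun η hη => ?_)
  have hlt : w.length < η.length := lt_of_not_ge (fun hle => hη (mem_Ls.2 hle))
  rw [phiW_short e η w hlt, mul_zero]

lemma mixedComp_nil (c : FPS) (e : FPS × FPS) : mixedComp c e [] = c [] := by
  rw [mixedComp_eq_sum]
  show ∑ η ∈ ({[]} : Finset (List Bool)), c η * phiW e η oneF [] = c []
  rw [Finset.sum_singleton]
  show c [] * 1 = c []
  ring

lemma mixedComp_add (p q : FPS) (e : FPS × FPS) (w : List Bool) :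
    mixedComp (fun u => p u + q u) e w = mixedComp p e w + mixedComp q e w := by
  rw [mixedComp_eq_sum, mixedComp_eq_sum, mixedComp_eq_sum, ← Finset.sum_add_distrib]
  exact Finset.sum_congr rfl (fun η _ => by ring)

lemma mixedComp_agree (g : FPS) (e : FPS × FPS) {n : ℕ} {u : List Bool} (hu : u.length ≤ n) :
    mixedComp g e u = ∑ η ∈ Ls n, g η * phiW e η oneF u := by
  rw [mixedComp_eq_sum]
  refine Finset.sum_subset (Ls_mono hu) (fun η hη hη' => ?_)
  rw [phiW_short e η u (lt_of_not_ge (fun hle => hη' (mem_Ls.2 hle))), mul_zero]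

lemma shuffle_mixedComp (g : FPS) (e : FPS × FPS) (h : FPS) (w : List Bool) :
    shuffle h (mixedComp g e) w
      = ∑ η ∈ Ls w.length, g η * shuffle h (phiW e η oneF) w := by
  rw [shuffle_congr_right w h (mixedComp g e)
      (fun u => ∑ η ∈ Ls w.length, g η * phiW e η oneF u)
      (fun u hu => mixedComp_agree g e hu),
    shuffle_sum_right]

lemma pre_cons (x : Bool) (g : FPS) (y : Bool) (u : List Bool) :
    pre x g (y :: u) = if y = x then g u else 0 := rfl

lemma Ls_succ_sum (n : ℕ) (F : List Bool → ℝ) :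
    ∑ η ∈ Ls (n + 1), F η
      = F [] + ∑ η ∈ Ls n, F (false :: η) + ∑ η ∈ Ls n, F (true :: η) := by
  show ∑ η ∈ insert [] (((Ls n).image (List.cons false)) ∪ ((Ls n).image (List.cons true))), F η = _
  rw [Finset.sum_insert (by simp), Finset.sum_union (by
      simp only [Finset.disjoint_left, Finset.mem_image]
      rintro a ⟨t, _, rfl⟩ ⟨t', _, h⟩
      exact absurd h (by simp)),
    Finset.sum_image (fun a _ b _ h => by injection h),
    Finset.sum_image (fun a _ b _ h => by injection h), add_assoc]

lemma mixedComp_cons_false (f : FPS) (e : FPS × FPS) (w : List Bool) :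
    mixedComp f e (false :: w)
      = mixedComp (fun u => f (false :: u)) e w
        + shuffle e.2 (mixedComp (fun u => f (true :: u)) e) w := by
  rw [mixedComp_eq_sum]
  show ∑ η ∈ Ls (w.length + 1), f η * phiW e η oneF (false :: w) = _
  rw [Ls_succ_sum]
  have h0 : f [] * phiW e [] oneF (false :: w) = 0 := by
    show f [] * (0 : ℝ) = 0; ring
  have h1 : ∑ η ∈ Ls w.length, f (false :: η) * phiW e (false :: η) oneF (false :: w)
      = mixedComp (fun u => f (false :: u)) e w := by
    rw [mixedComp_eq_sum]
    exact Finset.sum_congr rfl (fun η _ => by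
      rw [phiW_false, pre_cons]; simp [x₀])
  have h2 : ∑ η ∈ Ls w.length, f (true :: η) * phiW e (true :: η) oneF (false :: w)
      = shuffle e.2 (mixedComp (fun u => f (true :: u)) e) w := by
    rw [shuffle_mixedComp]
    exact Finset.sum_congr rfl (fun η _ => by
      rw [phiW_true]
      show f (true :: η) * (pre x₁ (shuffle e.1 (phiW e η oneF)) (false :: w)
        + pre x₀ (shuffle e.2 (phiW e η oneF)) (false :: w)) = _
      rw [pre_cons, pre_cons]; simp [x₀, x₁])
  rw [h0, h1, h2, zero_add]

lemma mixedComp_cons_true (f : FPS) (e : FPS × FPS) (w : List Bool) :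
    mixedComp f e (true :: w)
      = shuffle e.1 (mixedComp (fun u => f (true :: u)) e) w := by
  rw [mixedComp_eq_sum]
  show ∑ η ∈ Ls (w.length + 1), f η * phiW e η oneF (true :: w) = _
  rw [Ls_succ_sum]
  have h0 : f [] * phiW e [] oneF (true :: w) = 0 := by
    show f [] * (0 : ℝ) = 0; ring
  have h1 : ∑ η ∈ Ls w.length, f (false :: η) * phiW e (false :: η) oneF (true :: w)
      = 0 := by
    refine Finset.sum_eq_zero (fun η _ => ?_)
    rw [phiW_false, pre_cons]; simp [x₀]
  have h2 : ∑ η ∈ Ls w.length, f (true :: η) * phiW e (true :: η) oneF (true :: w)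
      = shuffle e.1 (mixedComp (fun u => f (true :: u)) e) w := by
    rw [shuffle_mixedComp]
    exact Finset.sum_congr rfl (fun η _ => by
      rw [phiW_true]
      show f (true :: η) * (pre x₁ (shuffle e.1 (phiW e η oneF)) (true :: w)
        + pre x₀ (shuffle e.2 (phiW e η oneF)) (true :: w)) = _
      rw [pre_cons, pre_cons]; simp [x₀, x₁])
  rw [h0, h1, h2, zero_add, zero_add]

lemma shuffle_comm_fun (a b : FPS) : shuffle a b = shuffle b a :=
  funext (fun u => shuffle_comm u a b)

lemma shuffle_left_swap (w : List Bool) (a b c : FPS) :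
    shuffle b (shuffle a c) w = shuffle a (shuffle b c) w := by
  rw [shuffle_comm w b, shuffle_assoc, shuffle_comm_fun c b]

lemma main_aux (e : FPS × FPS) : ∀ (n : ℕ) (w : List Bool), w.length ≤ n → ∀ c d : FPS,
    mixedComp (shuffle c d) e w = shuffle (mixedComp c e) (mixedComp d e) w := by
  intro n
  induction n with
  | zero =>
    intro w hw c d
    obtain rfl : w = [] := List.length_eq_zero_iff.1 (Nat.le_zero.1 hw)
    rw [mixedComp_nil, shuffle_nil, shuffle_nil, mixedComp_nil, mixedComp_nil]
  | succ n ih =>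
    intro w hw c d
    cases w with
    | nil => rw [mixedComp_nil, shuffle_nil, shuffle_nil, mixedComp_nil, mixedComp_nil]
    | cons x w =>
      have hw' : w.length ≤ n := by simpa [Nat.succ_le_succ_iff] using hw
      have hLadd : ∀ y : Bool, (fun u => shuffle c d (y :: u))
          = fun u => shuffle (fun v => c (y :: v)) d u + shuffle c (fun v => d (y :: v)) u :=
        fun y => rfl
      have hAadd : ∀ y : Bool, mixedComp (fun u => shuffle c d (y :: u)) e
          = fun u => mixedComp (shuffle (fun v => c (y :: v)) d) e u
            + mixedComp (shuffle c (fun v => d (y :: v))) e u := by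
        intro y
        rw [hLadd y]
        exact funext (fun u => mixedComp_add _ _ e u)
      have ihc : ∀ u : List Bool, u.length ≤ w.length → ∀ p q : FPS,
          mixedComp (shuffle p q) e u = shuffle (mixedComp p e) (mixedComp q e) u :=
        fun u hu p q => ih u (le_trans hu hw') p q
      cases x with
      | true =>
        rw [mixedComp_cons_true, shuffle_cons,
          shuffle_congr_right w e.1 (mixedComp (fun u => shuffle c d (true :: u)) e)
            (fun u => shuffle (mixedComp (fun v => c (true :: v)) e) (mixedComp d e) u
              + shuffle (mixedComp c e) (mixedComp (fun v => d (true :: v)) e) u)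
            (fun u hu => by
              rw [congrFun (hAadd true) u, ihc u hu (fun v => c (true :: v)) d,
                ihc u hu c (fun v => d (true :: v))]),
          shuffle_add_right,
          show (fun u => mixedComp c e (true :: u))
              = shuffle e.1 (mixedComp (fun v => c (true :: v)) e) from
            funext (fun u => mixedComp_cons_true c e u),
          show (fun u => mixedComp d e (true :: u))
              = shuffle e.1 (mixedComp (fun v => d (true :: v)) e) from
            funext (fun u => mixedComp_cons_true d e u)]
        have h1 := shuffle_assoc w e.1 (mixedComp (fun v => c (true :: v)) e) (mixedComp d e)
        have h2 := shuffle_left_swap w e.1 (mixedComp c e) (mixedComp (fun v => d (true :: v)) e)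
        linarith
      | false =>
        rw [mixedComp_cons_false, shuffle_cons]
        have hA0 : mixedComp (fun u => shuffle c d (false :: u)) e w
            = mixedComp (shuffle (fun v => c (false :: v)) d) e w
              + mixedComp (shuffle c (fun v => d (false :: v))) e w := by
          rw [hLadd false]; exact mixedComp_add _ _ e w
        have hI0c := ihc w le_rfl (fun v => c (false :: v)) d
        have hI0d := ihc w le_rfl c (fun v => d (false :: v))
        have hS2 : shuffle e.2 (mixedComp (fun u => shuffle c d (true :: u)) e) w
            = shuffle e.2 (shuffle (mixedComp (fun v => c (true :: v)) e) (mixedComp d e)) w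
              + shuffle e.2 (shuffle (mixedComp c e) (mixedComp (fun v => d (true :: v)) e)) w := by
          rw [shuffle_congr_right w e.2 (mixedComp (fun u => shuffle c d (true :: u)) e)
            (fun u => shuffle (mixedComp (fun v => c (true :: v)) e) (mixedComp d e) u
              + shuffle (mixedComp c e) (mixedComp (fun v => d (true :: v)) e) u)
            (fun u hu => by
              rw [congrFun (hAadd true) u, ihc u hu (fun v => c (true :: v)) d,
                ihc u hu c (fun v => d (true :: v))]),
            shuffle_add_right]
        have hRc : shuffle (fun u => mixedComp c e (false :: u)) (mixedComp d e) w
            = shuffle (mixedComp (fun v => c (false :: v)) e) (mixedComp d e) w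
              + shuffle (shuffle e.2 (mixedComp (fun v => c (true :: v)) e)) (mixedComp d e) w := by
          rw [show (fun u => mixedComp c e (false :: u))
              = fun u => mixedComp (fun v => c (false :: v)) e u
                + shuffle e.2 (mixedComp (fun v => c (true :: v)) e) u from
            funext (fun u => mixedComp_cons_false c e u), shuffle_add_left]
        have hRd : shuffle (mixedComp c e) (fun u => mixedComp d e (false :: u)) w
            = shuffle (mixedComp c e) (mixedComp (fun v => d (false :: v)) e) w
              + shuffle (mixedComp c e) (shuffle e.2 (mixedComp (fun v => d (true :: v)) e)) w := by
          rw [show (fun u => mixedComp d e (false :: u))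
              = fun u => mixedComp (fun v => d (false :: v)) e u
                + shuffle e.2 (mixedComp (fun v => d (true :: v)) e) u from
            funext (fun u => mixedComp_cons_false d e u), shuffle_add_right]
        have hE1 := shuffle_assoc w e.2 (mixedComp (fun v => c (true :: v)) e) (mixedComp d e)
        have hE2 := shuffle_left_swap w e.2 (mixedComp c e) (mixedComp (fun v => d (true :: v)) e)
        linarith

/-- The mixed composition product distributes to the left over the shuffle product. -/
theorem mixedComp_shuffle_distrib (c d : FPS) (e : FPS × FPS) :
    mixedComp (shuffle c d) e = shuffle (mixedComp c e) (mixedComp d e) := by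
  exact funext (fun w => main_aux e w.length w le_rfl c d)
end

section
/- Equip the set of pairs of series (ℝ⟨⟨X⟩⟩)² with the ultrametric dist(c_δ, d_δ) = max(dist(c_L,d_L), dist(c_R,d_R)). For any series c, writing c = (c,∅)∅ + c' with c' proper, the map d_δ ↦ c ∘̃ d_δ satisfies dist(c ∘̃ d_{δ,1}, c ∘̃ d_{δ,2}) ≤ σ^{ord(c')} · dist(d_{δ,1}, d_{δ,2}); in particular it is an ultrametric contraction. -/
/-- Order of a series: minimal word length in the support, `⊤` for the zero series. -/
noncomputable def ord (c : List Bool → ℝ) : ℕ∞ :=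
  sInf {n : ℕ∞ | ∃ w, c w ≠ 0 ∧ (w.length : ℕ∞) = n}

/-- `σ` raised to an extended-natural power, with `σ^⊤ = 0`. -/
noncomputable def upow (σ : ℝ) (n : ℕ∞) : ℝ :=
  if n = ⊤ then 0 else σ ^ n.toNat

/-- The ultrametric distance `dist(c,d) = σ^(ord (c-d))`. -/
noncomputable def udist (σ : ℝ) (c d : List Bool → ℝ) : ℝ :=
  upow σ (ord (c - d))

/-- The proper part `c'` of a series `c = (c,∅)∅ + c'`. -/
noncomputable def properPart (c : FPS) : FPS :=
  fun w => match w with | [] => 0 | _ => c w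

/-- The `max` ultrametric on pairs of series. -/
noncomputable def udistPair (σ : ℝ) (c d : FPS × FPS) : ℝ :=
  max (udist σ c.1 d.1) (udist σ c.2 d.2)

/-! ### Auxiliary lemmas -/

lemma shuffle_vanish : ∀ (w : List Bool) (a b : FPS) (p q : ℕ),
    (∀ u : List Bool, u.length < p → a u = 0) →
    (∀ u : List Bool, u.length < q → b u = 0) →
    w.length < p + q → shuffle a b w = 0
  | [], a, b, p, q, ha, hb, hw => by
      simp only [shuffle]
      rcases Nat.lt_or_ge 0 p with hp | hp
      · rw [ha [] (by simpa using hp)]; ring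
      · rw [hb [] (by simp at hw ⊢; omega)]; ring
  | x :: w, a, b, p, q, ha, hb, hw => by
      simp only [shuffle]
      have hw' : w.length + 1 < p + q := by simpa using hw
      rw [shuffle_vanish w _ b (p - 1) q
            (fun u hu => ha (x :: u) (by simp; omega)) hb (by omega),
          shuffle_vanish w a _ p (q - 1) ha
            (fun u hu => hb (x :: u) (by simp; omega)) (by omega)]
      ring

lemma phiW_vanish (d : FPS × FPS) (e : FPS) :
    ∀ (η w : List Bool), w.length < η.length → phiW d η e w = 0
  | [], w, hw => absurd hw (by simp)
  | x :: η, w, hw => by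
      have IH : ∀ w' : List Bool, w'.length < η.length → phiW d η e w' = 0 :=
        phiW_vanish d e η
      cases x
      · simp only [phiW, Bool.false_eq_true, if_false]
        cases w with
        | nil => simp [pre]
        | cons y u =>
          simp only [pre]
          split
          · exact IH u (by simp at hw; omega)
          · rfl
      · simp only [phiW, if_true]
        cases w with
        | nil => simp [pre]
        | cons y u =>
          have hu : u.length < η.length := by simp at hw; omega
          have s1 : shuffle d.1 (phiW d η e) u = 0 :=
            shuffle_vanish u _ _ 0 η.length (by intro _ h; omega) IH (by omega)
          have s2 : shuffle d.2 (phiW d η e) u = 0 :=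
            shuffle_vanish u _ _ 0 η.length (by intro _ h; omega) IH (by omega)
          simp [pre, Pi.add_apply, s1, s2]

lemma shuffle_sub_left : ∀ (w : List Bool) (a b e : FPS),
    shuffle a e w - shuffle b e w = shuffle (fun u => a u - b u) e w
  | [], a, b, e => by simp only [shuffle]; ring
  | x :: w, a, b, e => by
      simp only [shuffle]
      have h1 := shuffle_sub_left w (fun u => a (x :: u)) (fun u => b (x :: u)) e
      have h2 := shuffle_sub_left w a b (fun u => e (x :: u))
      linarith

lemma shuffle_sub_right : ∀ (w : List Bool) (a e₁ e₂ : FPS),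
    shuffle a e₁ w - shuffle a e₂ w = shuffle a (fun u => e₁ u - e₂ u) w
  | [], a, e₁, e₂ => by simp only [shuffle]; ring
  | x :: w, a, e₁, e₂ => by
      simp only [shuffle]
      have h1 := shuffle_sub_right w (fun u => a (x :: u)) e₁ e₂
      have h2 := shuffle_sub_right w a (fun u => e₁ (x :: u)) (fun u => e₂ (x :: u))
      linarith

lemma phiW_diff (d₁ d₂ : FPS × FPS) (m : ℕ)
    (h1 : ∀ u : List Bool, u.length < m → d₁.1 u = d₂.1 u)
    (h2 : ∀ u : List Bool, u.length < m → d₁.2 u = d₂.2 u) :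
    ∀ (η w : List Bool), w.length < η.length + m →
      phiW d₁ η oneF w = phiW d₂ η oneF w
  | [], w, hw => rfl
  | x :: η, w, hw => by
      have IH : ∀ w' : List Bool, w'.length < η.length + m →
          phiW d₁ η oneF w' = phiW d₂ η oneF w' := phiW_diff d₁ d₂ m h1 h2 η
      cases x
      · simp only [phiW, Bool.false_eq_true, if_false]
        cases w with
        | nil => simp [pre]
        | cons y u =>
          simp only [pre]
          split
          · exact IH u (by simp at hw; omega)
          · rfl
      · simp only [phiW, if_true]
        cases w with
        | nil => simp [pre]
        | cons y u =>
          have hu : u.length < η.length + m := by simp at hw; omega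
          have key : ∀ (f₁ f₂ : FPS), (∀ v : List Bool, v.length < m → f₁ v = f₂ v) →
              shuffle f₁ (phiW d₁ η oneF) u = shuffle f₂ (phiW d₂ η oneF) u := by
            intro f₁ f₂ hf
            have e1 : shuffle f₁ (phiW d₁ η oneF) u - shuffle f₂ (phiW d₁ η oneF) u = 0 := by
              rw [shuffle_sub_left]
              exact shuffle_vanish u _ _ m η.length
                (fun v hv => by rw [hf v hv]; ring)
                (fun v hv => phiW_vanish d₁ oneF η v hv) (by omega)
            have e2 : shuffle f₂ (phiW d₁ η oneF) u - shuffle f₂ (phiW d₂ η oneF) u = 0 := by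
              rw [shuffle_sub_right]
              exact shuffle_vanish u _ _ 0 (η.length + m)
                (by intro _ h; omega)
                (fun v hv => by rw [IH v hv]; ring) (by omega)
            linarith
          have k1 := key d₁.1 d₂.1 h1
          have k2 := key d₁.2 d₂.2 h2
          simp [pre, Pi.add_apply, k1, k2]

lemma le_ord {f : List Bool → ℝ} {n : ℕ∞}
    (h : ∀ w : List Bool, (w.length : ℕ∞) < n → f w = 0) : n ≤ ord f := by
  refine le_sInf ?_
  rintro k ⟨w, hw, rfl⟩
  by_contra hlt
  exact hw (h w (lt_of_not_ge hlt))

lemma ord_le {f : List Bool → ℝ} {w : List Bool} (h : f w ≠ 0) :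
    ord f ≤ (w.length : ℕ∞) :=
  sInf_le ⟨w, h, rfl⟩

lemma apply_eq_zero_of_lt_ord {f : List Bool → ℝ} {w : List Bool}
    (h : (w.length : ℕ∞) < ord f) : f w = 0 := by
  by_contra hf
  exact absurd (ord_le hf) (not_le.mpr h)

lemma upow_nonneg {σ : ℝ} (hσ : 0 ≤ σ) (n : ℕ∞) : 0 ≤ upow σ n := by
  unfold upow
  split
  · exact le_refl 0
  · exact pow_nonneg hσ _

lemma upow_anti {σ : ℝ} (h0 : 0 ≤ σ) (h1 : σ ≤ 1) {a b : ℕ∞} (hab : a ≤ b) :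
    upow σ b ≤ upow σ a := by
  unfold upow
  rcases eq_or_ne b ⊤ with hb | hb
  · simp only [hb, if_true]
    split
    · exact le_refl 0
    · exact pow_nonneg h0 _
  · have ha : a ≠ ⊤ := fun h => hb (top_le_iff.mp (h ▸ hab))
    simp only [ha, hb, if_false]
    exact pow_le_pow_of_le_one h0 h1 (ENat.toNat_le_toNat hab hb)

lemma upow_add (σ : ℝ) (a b : ℕ∞) : upow σ (a + b) = upow σ a * upow σ b := by
  unfold upow
  rcases eq_or_ne a ⊤ with ha | ha
  · simp [ha]
  · rcases eq_or_ne b ⊤ with hb | hb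
    · simp [hb]
    · have hab : a + b ≠ ⊤ := by
        exact WithTop.add_ne_top.mpr ⟨ha, hb⟩
      simp only [ha, hb, hab, if_false]
      rw [ENat.toNat_add ha hb, pow_add]

/-- The mixed composition product is an ultrametric contraction in its right argument:
`dist(c ∘̃ d₁, c ∘̃ d₂) ≤ σ^{ord c'} · dist(d₁, d₂)`, where `c'` is the proper part of `c`. -/
theorem mixedComp_contraction (σ : ℝ) (hσ0 : 0 < σ) (hσ1 : σ < 1)
    (c : FPS) (d₁ d₂ : FPS × FPS) :
    udist σ (mixedComp c d₁) (mixedComp c d₂) ≤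
      upow σ (ord (properPart c)) * udistPair σ d₁ d₂ ∧
    udist σ (mixedComp c d₁) (mixedComp c d₂) ≤ σ * udistPair σ d₁ d₂ := by
  set A := ord (properPart c) with hA
  set B := min (ord (d₁.1 - d₂.1)) (ord (d₁.2 - d₂.2)) with hB
  have hpair : udistPair σ d₁ d₂ = upow σ B := by
    unfold udistPair udist
    rcases le_total (ord (d₁.1 - d₂.1)) (ord (d₁.2 - d₂.2)) with h | h
    · rw [hB, min_eq_left h, max_eq_left (upow_anti hσ0.le hσ1.le h)]
    · rw [hB, min_eq_right h, max_eq_right (upow_anti hσ0.le hσ1.le h)]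
  have key : ∀ w : List Bool, (w.length : ℕ∞) < A + B →
      mixedComp c d₁ w = mixedComp c d₂ w := by
    intro w hw
    set L := w.length with hL
    set n := (min A ((L + 1 : ℕ) : ℕ∞)).toNat with hn
    set m := (min B ((L + 1 : ℕ) : ℕ∞)).toNat with hm
    have hnfin : min A ((L + 1 : ℕ) : ℕ∞) ≠ ⊤ :=
      ne_top_of_le_ne_top (ENat.coe_ne_top _) (min_le_right _ _)
    have hmfin : min B ((L + 1 : ℕ) : ℕ∞) ≠ ⊤ :=
      ne_top_of_le_ne_top (ENat.coe_ne_top _) (min_le_right _ _)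
    have hn_eq : (n : ℕ∞) = min A ((L + 1 : ℕ) : ℕ∞) := by
      rw [hn]; exact ENat.coe_toNat hnfin
    have hm_eq : (m : ℕ∞) = min B ((L + 1 : ℕ) : ℕ∞) := by
      rw [hm]; exact ENat.coe_toNat hmfin
    have hnA : (n : ℕ∞) ≤ A := hn_eq ▸ min_le_left _ _
    have hmB : (m : ℕ∞) ≤ B := hm_eq ▸ min_le_left _ _
    have hlt : (L : ℕ∞) < (n : ℕ∞) + (m : ℕ∞) := by
      rw [hn_eq, hm_eq]
      rcases le_or_gt ((L + 1 : ℕ) : ℕ∞) A with h | h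
      · rw [min_eq_right h]
        calc (L : ℕ∞) < ((L + 1 : ℕ) : ℕ∞) := by exact_mod_cast Nat.lt_succ_self L
          _ ≤ _ := le_add_right (le_refl _)
      · rw [min_eq_left h.le]
        rcases le_or_gt ((L + 1 : ℕ) : ℕ∞) B with h' | h'
        · rw [min_eq_right h']
          calc (L : ℕ∞) < ((L + 1 : ℕ) : ℕ∞) := by exact_mod_cast Nat.lt_succ_self L
            _ ≤ _ := le_add_left (le_refl _)
        · rw [min_eq_left h'.le]; exact hw
    have hLnm : L < n + m := by exact_mod_cast hlt
    have hd1 : ∀ u : List Bool, u.length < m → d₁.1 u = d₂.1 u := by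
      intro u hu
      have hu' : (u.length : ℕ∞) < ord (d₁.1 - d₂.1) :=
        lt_of_lt_of_le (by exact_mod_cast hu)
          (le_trans hmB (hB ▸ min_le_left _ _))
      have := apply_eq_zero_of_lt_ord hu'
      exact sub_eq_zero.mp (by simpa using this)
    have hd2 : ∀ u : List Bool, u.length < m → d₁.2 u = d₂.2 u := by
      intro u hu
      have hu' : (u.length : ℕ∞) < ord (d₁.2 - d₂.2) :=
        lt_of_lt_of_le (by exact_mod_cast hu)
          (le_trans hmB (hB ▸ min_le_right _ _))
      have := apply_eq_zero_of_lt_ord hu'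
      exact sub_eq_zero.mp (by simpa using this)
    unfold mixedComp
    refine tsum_congr fun η => ?_
    cases η with
    | nil => simp [phiW]
    | cons x η' =>
      by_cases hc : c (x :: η') = 0
      · rw [hc]; ring
      · have hp : properPart c (x :: η') ≠ 0 := by simpa [properPart] using hc
        have h1 : (n : ℕ∞) ≤ ((x :: η').length : ℕ∞) := le_trans hnA (ord_le hp)
        have h1' : n ≤ (x :: η').length := by exact_mod_cast h1
        congr 1
        exact phiW_diff d₁ d₂ m hd1 hd2 (x :: η') w (by omega)
  have hord : A + B ≤ ord (mixedComp c d₁ - mixedComp c d₂) :=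
    le_ord fun w hw => by simp [Pi.sub_apply, key w hw]
  have hA1 : (1 : ℕ∞) ≤ A := by
    refine hA ▸ le_ord fun w hw => ?_
    have hl : w.length < 1 := by exact_mod_cast hw
    have hnil : w = [] := List.length_eq_zero_iff.mp (by omega)
    subst hnil; rfl
  have main : udist σ (mixedComp c d₁) (mixedComp c d₂) ≤
      upow σ A * udistPair σ d₁ d₂ := by
    rw [hpair, ← upow_add]
    exact upow_anti hσ0.le hσ1.le hord
  refine ⟨main, le_trans main ?_⟩
  have h2 : upow σ A ≤ σ := by
    unfold upow
    split
    · exact hσ0.le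
    · rename_i h
      have h1' : 1 ≤ A.toNat := by
        have := ENat.toNat_le_toNat hA1 h
        simpa using this
      calc σ ^ A.toNat ≤ σ ^ 1 := pow_le_pow_of_le_one hσ0.le hσ1.le h1'
        _ = σ := pow_one σ
  exact mul_le_mul_of_nonneg_right h2
    (le_trans (upow_nonneg hσ0.le _) (le_max_left _ _))
end
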